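/- Let α ∈ (0,1) and set S_α = ∫_0^∞ u^{−1−α} sin(u) du and m(ξ) = sgn(ξ)|ξ|^α (with m(0)=0). Then for all ξ₁, ξ₂ ∈ ℝ, the bilinear symbol Ω(ξ₁,ξ₂) = ∫_ℝ sgn(y)|y|^{1−α} (e^{iξ₁y}−1)(e^{iξ₂y}−1)/y² dy satisfies Ω(ξ₁,ξ₂) = 2i·S_α·( m(ξ₁+ξ₂) − m(ξ₁) − m(ξ₂) ). In particular Ω is, up to a constant, the resonance function of the dispersion relation ω(ξ) = c·i·ξ|ξ|^{α−1}. -/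

import Mathlib

open MeasureTheory Set

noncomputable def resK (α ξ : ℝ) (y : ℝ) : ℂ :=
  ((Real.sign y * |y| ^ (-1 - α) : ℝ) : ℂ) * (Complex.exp (Complex.I * ξ * y) - 1)

lemma measurable_real_sign : Measurable Real.sign := by
  have : Real.sign = fun r : ℝ => if r < 0 then (-1 : ℝ) else if 0 < r then 1 else 0 := rfl
  rw [this]
  exact Measurable.ite (measurableSet_lt measurable_id measurable_const) measurable_const
    (Measurable.ite (measurableSet_lt measurable_const measurable_id) measurable_const
      measurable_const)

lemma integrable_of_even_aux {f : ℝ → ℝ} (he : ∀ y, f (-y) = f y)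
    (h : IntegrableOn f (Ioi (0:ℝ))) : Integrable f := by
  have A : MeasurableEmbedding fun x : ℝ => -x := (Homeomorph.neg ℝ).measurableEmbedding
  have hIic : IntegrableOn f (Iic (0:ℝ)) := by
    rw [← Measure.map_neg_eq_self (volume : Measure ℝ)]
    rw [A.integrableOn_map_iff]
    simp_rw [Function.comp_def, he, neg_preimage, neg_Iic, neg_zero]
    exact Iff.mpr integrableOn_Ici_iff_integrableOn_Ioi h
  have h2 := hIic.union h
  rwa [Iic_union_Ioi, integrableOn_univ] at h2

lemma integral_odd_zero {f : ℝ → ℝ} (ho : ∀ y, f (-y) = - f y) :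
    ∫ y, f y = 0 := by
  have h1 : ∫ y : ℝ, f (-y) = ∫ y, f y := integral_neg_eq_self f volume
  have h2 : ∫ y : ℝ, f (-y) = - ∫ y, f y := by
    simp_rw [ho]
    exact integral_neg f
  linarith [h1.symm.trans h2]

lemma norm_exp_mul_I_sub_one_le (x : ℝ) :
    ‖Complex.exp (↑x * Complex.I) - 1‖ ≤ |x| := by
  have h : Complex.exp (↑x * Complex.I) - 1
      = ↑(Real.cos x - 1) + ↑(Real.sin x) * Complex.I := by
    rw [Complex.exp_mul_I, ← Complex.ofReal_cos, ← Complex.ofReal_sin]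
    push_cast
    ring
  rw [h, Complex.norm_def, Complex.normSq_add_mul_I]
  have hc := Real.cos_sq (x / 2)
  rw [show 2 * (x / 2) = x by ring] at hc
  have hs := Real.sin_sq_add_cos_sq (x / 2)
  have hb : |Real.sin (x / 2)| ≤ |x / 2| := Real.abs_sin_le_abs
  have hsq : Real.sin (x / 2) ^ 2 ≤ (x / 2) ^ 2 := by
    rw [← sq_abs (Real.sin (x/2)), ← sq_abs (x/2)]
    exact pow_le_pow_left₀ (abs_nonneg _) hb 2
  have key : (Real.cos x - 1) ^ 2 + Real.sin x ^ 2 ≤ x ^ 2 := by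
    have hsx := Real.sin_sq_add_cos_sq x
    nlinarith [hsq, hc, hs, hsx]
  calc Real.sqrt ((Real.cos x - 1) ^ 2 + Real.sin x ^ 2)
      ≤ Real.sqrt (x ^ 2) := Real.sqrt_le_sqrt key
    _ = |x| := Real.sqrt_sq_eq_abs x

lemma scale_pos {α ξ : ℝ} (hξ : 0 < ξ) :
    ∫ t in Ioi (0:ℝ), t ^ (-1 - α) * Real.sin (ξ * t)
      = ξ ^ α * ∫ u in Ioi (0:ℝ), u ^ (-1 - α) * Real.sin u := by
  have h := integral_comp_mul_left_Ioi (fun u => u ^ (-1 - α) * Real.sin u) 0 hξ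
  rw [mul_zero] at h
  have h2 : ∫ x in Ioi (0:ℝ), (ξ * x) ^ (-1 - α) * Real.sin (ξ * x)
      = ξ ^ (-1 - α) * ∫ x in Ioi (0:ℝ), x ^ (-1 - α) * Real.sin (ξ * x) := by
    rw [← integral_const_mul]
    refine setIntegral_congr_fun measurableSet_Ioi (fun x hx => ?_)
    rw [Real.mul_rpow hξ.le (le_of_lt hx)]
    ring
  have key : ξ ^ (-1 - α) * ∫ x in Ioi (0:ℝ), x ^ (-1 - α) * Real.sin (ξ * x)
      = ξ⁻¹ * ∫ u in Ioi (0:ℝ), u ^ (-1 - α) * Real.sin u := by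
    rw [← h2]
    simpa [smul_eq_mul] using h
  have hne : ξ ^ (-1 - α) ≠ 0 := (Real.rpow_pos_of_pos hξ _).ne'
  have hpow : (ξ ^ (-1 - α))⁻¹ * ξ⁻¹ = ξ ^ α := by
    rw [← Real.rpow_neg hξ.le, ← Real.rpow_neg_one ξ, ← Real.rpow_add hξ]
    congr 1
    ring
  calc ∫ t in Ioi (0:ℝ), t ^ (-1 - α) * Real.sin (ξ * t)
      = (ξ ^ (-1 - α))⁻¹ * (ξ ^ (-1 - α) * ∫ x in Ioi (0:ℝ), x ^ (-1 - α) * Real.sin (ξ * x)) := by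
        rw [inv_mul_cancel_left₀ hne]
    _ = (ξ ^ (-1 - α))⁻¹ * (ξ⁻¹ * ∫ u in Ioi (0:ℝ), u ^ (-1 - α) * Real.sin u) := by rw [key]
    _ = ξ ^ α * ∫ u in Ioi (0:ℝ), u ^ (-1 - α) * Real.sin u := by rw [← mul_assoc, hpow]

lemma F_ioi (α : ℝ) (ξ : ℝ) :
    ∫ t in Ioi (0:ℝ), t ^ (-1 - α) * Real.sin (ξ * t)
      = Real.sign ξ * |ξ| ^ α * ∫ u in Ioi (0:ℝ), u ^ (-1 - α) * Real.sin u := by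
  rcases lt_trichotomy ξ 0 with h | h | h
  · have hsin : ∀ t : ℝ, t ^ (-1 - α) * Real.sin (ξ * t)
        = -(t ^ (-1 - α) * Real.sin (-ξ * t)) := by
      intro t
      rw [neg_mul, Real.sin_neg]
      ring
    simp_rw [hsin]
    rw [integral_neg, scale_pos (neg_pos.2 h), Real.sign_of_neg h, abs_of_neg h]
    ring
  · simp [h]
  · rw [scale_pos h, Real.sign_of_pos h, abs_of_pos h]
    ring

lemma integrable_bound (α ξ : ℝ) (hα : α ∈ Set.Ioo (0:ℝ) 1) :
    Integrable (fun y : ℝ => min 2 (|ξ| * |y|) * |y| ^ (-1 - α)) := by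
  have hmeas : Measurable (fun y : ℝ => min 2 (|ξ| * |y|) * |y| ^ (-1 - α)) := by
    fun_prop
  refine integrable_of_even_aux (fun y => by simp [abs_neg]) ?_
  have h1 : IntegrableOn (fun y : ℝ => min 2 (|ξ| * |y|) * |y| ^ (-1 - α)) (Ioc (0:ℝ) 1) := by
    have hint : IntegrableOn (fun y : ℝ => |ξ| * y ^ (-α)) (Ioc (0:ℝ) 1) := by
      have h := intervalIntegral.intervalIntegrable_rpow' (a := 0) (b := 1)
        (show (-1:ℝ) < -α by linarith [hα.2])
      rw [intervalIntegrable_iff_integrableOn_Ioc_of_le zero_le_one] at h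
      exact h.const_mul _
    refine hint.mono' (hmeas.aestronglyMeasurable.restrict) ?_
    filter_upwards [ae_restrict_mem measurableSet_Ioc] with y hy
    have hy0 : 0 < y := hy.1
    have habs : |y| = y := abs_of_pos hy0
    have hnonneg : 0 ≤ min 2 (|ξ| * |y|) * |y| ^ (-1 - α) := by
      apply mul_nonneg (le_min (by norm_num) (by positivity)) (Real.rpow_nonneg (abs_nonneg y) _)
    rw [Real.norm_eq_abs, abs_of_nonneg hnonneg, habs]
    calc min 2 (|ξ| * y) * y ^ (-1 - α) ≤ (|ξ| * y) * y ^ (-1 - α) := by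
          apply mul_le_mul_of_nonneg_right (min_le_right _ _) (Real.rpow_nonneg hy0.le _)
      _ = |ξ| * y ^ (-α) := by
          rw [mul_assoc]
          congr 1
          rw [show (-α : ℝ) = 1 + (-1 - α) by ring, Real.rpow_add hy0, Real.rpow_one]
  have h2 : IntegrableOn (fun y : ℝ => min 2 (|ξ| * |y|) * |y| ^ (-1 - α)) (Ioi (1:ℝ)) := by
    have hint : IntegrableOn (fun y : ℝ => 2 * y ^ (-1 - α)) (Ioi (1:ℝ)) :=
      (integrableOn_Ioi_rpow_of_lt (show (-1 - α) < -1 by linarith [hα.1]) zero_lt_one).const_mul 2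
    refine hint.mono' (hmeas.aestronglyMeasurable.restrict) ?_
    filter_upwards [ae_restrict_mem measurableSet_Ioi] with y hy
    have hy0 : (0:ℝ) < y := lt_trans zero_lt_one hy
    have habs : |y| = y := abs_of_pos hy0
    have hnonneg : 0 ≤ min 2 (|ξ| * |y|) * |y| ^ (-1 - α) := by
      apply mul_nonneg (le_min (by norm_num) (by positivity)) (Real.rpow_nonneg (abs_nonneg y) _)
    rw [Real.norm_eq_abs, abs_of_nonneg hnonneg, habs]
    exact mul_le_mul_of_nonneg_right (min_le_left _ _) (Real.rpow_nonneg hy0.le _)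
  have h := h1.union h2
  rwa [Ioc_union_Ioi_eq_Ioi zero_le_one] at h

lemma integrable_resK (α ξ : ℝ) (hα : α ∈ Set.Ioo (0:ℝ) 1) :
    Integrable (resK α ξ) := by
  have hmeas : AEStronglyMeasurable (resK α ξ) volume := by
    apply Measurable.aestronglyMeasurable
    apply Measurable.mul
    · exact Complex.measurable_ofReal.comp
        (measurable_real_sign.mul (by fun_prop : Measurable fun y : ℝ => |y| ^ (-1 - α)))
    · exact ((Complex.continuous_exp.comp
        ((continuous_const.mul Complex.continuous_ofReal))).sub continuous_const).measurable
  refine (integrable_bound α ξ hα).mono' hmeas ?_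
  filter_upwards with y
  have hbound : ‖Complex.exp (Complex.I * ξ * y) - 1‖ ≤ min 2 (|ξ| * |y|) := by
    have hrw : Complex.I * (ξ : ℂ) * (y : ℂ) = ((ξ * y : ℝ) : ℂ) * Complex.I := by
      push_cast; ring
    rw [hrw]
    refine le_min ?_ ?_
    · calc ‖Complex.exp (((ξ * y : ℝ) : ℂ) * Complex.I) - 1‖
          ≤ ‖Complex.exp (((ξ * y : ℝ) : ℂ) * Complex.I)‖ + ‖(1:ℂ)‖ := norm_sub_le _ _
        _ ≤ 2 := by
            rw [Complex.norm_exp_ofReal_mul_I]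
            norm_num
    · calc ‖Complex.exp (((ξ * y : ℝ) : ℂ) * Complex.I) - 1‖ ≤ |ξ * y| :=
          norm_exp_mul_I_sub_one_le _
        _ = |ξ| * |y| := abs_mul _ _
  calc ‖resK α ξ y‖
      = |Real.sign y * |y| ^ (-1 - α)| * ‖Complex.exp (Complex.I * ξ * y) - 1‖ := by
        rw [resK, norm_mul, Complex.norm_real, Real.norm_eq_abs]
    _ ≤ |y| ^ (-1 - α) * min 2 (|ξ| * |y|) := by
        apply mul_le_mul ?_ hbound (norm_nonneg _) (Real.rpow_nonneg (abs_nonneg y) _)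
        rw [abs_mul]
        calc |Real.sign y| * abs (|y| ^ (-1 - α)) ≤ 1 * abs (|y| ^ (-1 - α)) := by
              apply mul_le_mul_of_nonneg_right ?_ (abs_nonneg _)
              rcases lt_trichotomy y 0 with h | h | h
              · simp [Real.sign_of_neg h]
              · simp [h]
              · simp [Real.sign_of_pos h]
          _ = |y| ^ (-1 - α) := by
              rw [one_mul, abs_of_nonneg (Real.rpow_nonneg (abs_nonneg y) _)]
    _ = min 2 (|ξ| * |y|) * |y| ^ (-1 - α) := mul_comm _ _

lemma integral_resK (α : ℝ) (hα : α ∈ Set.Ioo (0:ℝ) 1) (ξ S : ℝ)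
    (hS : S = ∫ u in Ioi (0:ℝ), u ^ (-1 - α) * Real.sin u) :
    ∫ y, resK α ξ y
      = 2 * Complex.I * (S : ℂ) * ((Real.sign ξ * |ξ| ^ α : ℝ) : ℂ) := by
  set g1 : ℝ → ℝ := fun y => Real.sign y * |y| ^ (-1 - α) * (Real.cos (ξ * y) - 1) with hg1
  set g2 : ℝ → ℝ := fun y => Real.sign y * |y| ^ (-1 - α) * Real.sin (ξ * y) with hg2
  have hre : ∀ y, resK α ξ y = ↑(g1 y) + ↑(g2 y) * Complex.I := by
    intro y
    rw [resK, show Complex.I * (ξ:ℂ) * (y:ℂ) = ((ξ * y : ℝ):ℂ) * Complex.I by push_cast; ring,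
      Complex.exp_mul_I, ← Complex.ofReal_cos, ← Complex.ofReal_sin]
    simp only [hg1, hg2]
    push_cast
    ring
  have hint := integrable_resK α ξ hα
  have hint1 : Integrable g1 := by
    refine hint.re.congr ?_
    filter_upwards with y
    rw [hre y]
    simp
  have hint2 : Integrable g2 := by
    refine hint.im.congr ?_
    filter_upwards with y
    rw [hre y]
    simp
  have hsplit : ∫ y, resK α ξ y = ↑(∫ y, g1 y) + (↑(∫ y, g2 y) : ℂ) * Complex.I := by
    have e1 : ∀ y, RCLike.re (resK α ξ y) = g1 y := fun y => by rw [hre y]; simp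
    have e2 : ∀ y, RCLike.im (resK α ξ y) = g2 y := fun y => by rw [hre y]; simp
    rw [← integral_re_add_im hint]
    simp_rw [e1, e2, RCLike.I_to_complex]
    norm_cast
  have hz : ∫ y, g1 y = 0 := by
    apply integral_odd_zero
    intro y
    simp only [hg1, Real.sign_neg, abs_neg, mul_neg, neg_mul, Real.cos_neg]
  have heven : g2 = fun y => (fun t => t ^ (-1 - α) * Real.sin (ξ * t)) |y| := by
    funext y
    rcases lt_trichotomy y 0 with h | h | h
    · simp only [hg2, Real.sign_of_neg h, abs_of_neg h, mul_neg, Real.sin_neg]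
      ring
    · simp [hg2, h]
    · simp [hg2, Real.sign_of_pos h, abs_of_pos h]
  have h2 : ∫ y, g2 y = 2 * (Real.sign ξ * |ξ| ^ α * S) := by
    rw [heven, integral_comp_abs, F_ioi α ξ, ← hS]
  rw [hsplit, hz, h2]
  push_cast
  ring

/-- Resonance identity / null structure for the gSQG front equation. -/
theorem stmt_11 (α : ℝ) (hα : α ∈ Set.Ioo (0:ℝ) 1) (ξ₁ ξ₂ : ℝ)
    (S : ℝ) (hS : S = ∫ u in Set.Ioi (0:ℝ), u ^ (-1 - α) * Real.sin u)
    (m : ℝ → ℝ) (hm : ∀ ξ : ℝ, m ξ = Real.sign ξ * |ξ| ^ α) :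
    (∫ y : ℝ, (↑(Real.sign y * |y| ^ (1 - α)) : ℂ) *
        ((Complex.exp (Complex.I * (ξ₁ : ℂ) * (y : ℂ)) - 1) *
          (Complex.exp (Complex.I * (ξ₂ : ℂ) * (y : ℂ)) - 1) / (y : ℂ) ^ 2))
      = 2 * Complex.I * (S : ℂ) * ((m (ξ₁ + ξ₂) : ℂ) - (m ξ₁ : ℂ) - (m ξ₂ : ℂ)) := by
  have hkey : ∀ y : ℝ, (↑(Real.sign y * |y| ^ (1 - α)) : ℂ) *
        ((Complex.exp (Complex.I * (ξ₁ : ℂ) * (y : ℂ)) - 1) *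
          (Complex.exp (Complex.I * (ξ₂ : ℂ) * (y : ℂ)) - 1) / (y : ℂ) ^ 2)
      = resK α (ξ₁ + ξ₂) y - resK α ξ₁ y - resK α ξ₂ y := by
    intro y
    by_cases hy : y = 0
    · subst hy
      simp [resK]
    · have hy2 : ((y:ℂ)) ^ 2 ≠ 0 := pow_ne_zero _ (by exact_mod_cast hy)
      have hy1 : (y:ℂ) ≠ 0 := by exact_mod_cast hy
      have habs : (0:ℝ) < |y| := abs_pos.mpr hy
      have hrpow : |y| ^ (1 - α) = |y| ^ (-1 - α) * y ^ 2 := by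
        rw [show (y:ℝ) ^ 2 = |y| ^ (2:ℕ) by rw [sq_abs], ← Real.rpow_natCast |y| 2,
          ← Real.rpow_add habs]
        congr 1
        ring
      have hexp : Complex.exp (Complex.I * ((ξ₁ + ξ₂ : ℝ) : ℂ) * (y : ℂ))
          = Complex.exp (Complex.I * ξ₁ * y) * Complex.exp (Complex.I * ξ₂ * y) := by
        rw [← Complex.exp_add]
        congr 1
        push_cast
        ring
      simp only [resK, hexp, hrpow]
      push_cast
      field_simp
      ring
  rw [integral_congr_ae (Filter.Eventually.of_forall hkey)]
  have i1 : Integrable (fun y => resK α (ξ₁ + ξ₂) y - resK α ξ₁ y) volume := by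
    exact (integrable_resK α (ξ₁ + ξ₂) hα).sub (integrable_resK α ξ₁ hα)
  rw [integral_sub i1 (integrable_resK α ξ₂ hα),
    integral_sub (integrable_resK α (ξ₁ + ξ₂) hα) (integrable_resK α ξ₁ hα),
    integral_resK α hα (ξ₁ + ξ₂) S hS, integral_resK α hα ξ₁ S hS,
    integral_resK α hα ξ₂ S hS, hm, hm, hm]
  push_cast
  ring
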